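/- (Case $p=1$, sequence version.) Let $\{X_n, n\ge 1\}$ be a sequence of pairwise independent random vectors in a real separable Hilbert space $\mathcal{H}$ such that $\{\|X_n\|\}$ is uniformly integrable in the Cesàro sense. Then $n^{-1}\max_{1\le k\le n}\|\sum_{i=1}^k(X_i-\mathbb{E}X_i)\|\to 0$ in $L_1$ as $n\to\infty$. -/

import Mathlib

open MeasureTheory Filter Finset ProbabilityTheory

lemma aux_integral_inner_of_indep {Ω H : Type*} [MeasurableSpace Ω]
    [NormedAddCommGroup H] [InnerProductSpace ℝ H] [CompleteSpace H]
    [SecondCountableTopology H] [MeasurableSpace H] [BorelSpace H]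
    (P : Measure Ω) [IsProbabilityMeasure P] {f g : Ω → H}
    (hf : Measurable f) (hg : Measurable g) {C : ℝ}
    (hfb : ∀ ω, ‖f ω‖ ≤ C) (hgb : ∀ ω, ‖g ω‖ ≤ C)
    (hind : IndepFun f g P) :
    ∫ ω, (inner ℝ (f ω) (g ω) : ℝ) ∂P = (inner ℝ (∫ ω, f ω ∂P) (∫ ω, g ω ∂P) : ℝ) := by
  have hmap := (indepFun_iff_map_prod_eq_prod_map_map hf.aemeasurable hg.aemeasurable).mp hind
  set μ := P.map f with hμ
  set ν := P.map g with hν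
  have : IsProbabilityMeasure μ := Measure.isProbabilityMeasure_map hf.aemeasurable
  have : IsProbabilityMeasure ν := Measure.isProbabilityMeasure_map hg.aemeasurable
  have hcont : Continuous (fun p : H × H => (inner ℝ p.1 p.2 : ℝ)) := continuous_inner
  -- integrability of id on μ, ν
  have hμb : ∀ᵐ x ∂μ, ‖x‖ ≤ C := by
    rw [ae_map_iff hf.aemeasurable (by
      exact measurableSet_le (measurable_norm) measurable_const)]
    exact Filter.Eventually.of_forall hfb
  have hνb : ∀ᵐ y ∂ν, ‖y‖ ≤ C := by
    rw [ae_map_iff hg.aemeasurable (by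
      exact measurableSet_le (measurable_norm) measurable_const)]
    exact Filter.Eventually.of_forall hgb
  have hμint : Integrable (fun x : H => x) μ :=
    ⟨aestronglyMeasurable_id, HasFiniteIntegral.mono' (hasFiniteIntegral_const C) hμb⟩
  have hνint : Integrable (fun y : H => y) ν :=
    ⟨aestronglyMeasurable_id, HasFiniteIntegral.mono' (hasFiniteIntegral_const C) hνb⟩
  -- integrability of inner on product
  have hprodb : ∀ᵐ p ∂(μ.prod ν), ‖(inner ℝ p.1 p.2 : ℝ)‖ ≤ C * C := by
    rw [Measure.ae_prod_iff_ae_ae (by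
      exact measurableSet_le hcont.measurable.norm measurable_const)]
    filter_upwards [hμb] with x hx
    filter_upwards [hνb] with y hy
    calc ‖(inner ℝ x y : ℝ)‖ ≤ ‖x‖ * ‖y‖ := norm_inner_le_norm x y
    _ ≤ C * C := by
        have h0 : (0:ℝ) ≤ ‖x‖ := norm_nonneg _
        have h0' : (0:ℝ) ≤ ‖y‖ := norm_nonneg _
        exact mul_le_mul hx hy h0' (le_trans h0 hx)
  have hprodint : Integrable (fun p : H × H => (inner ℝ p.1 p.2 : ℝ)) (μ.prod ν) :=
    Integrable.mono' (integrable_const (C * C))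
      (hcont.aestronglyMeasurable) hprodb
  calc ∫ ω, (inner ℝ (f ω) (g ω) : ℝ) ∂P
      = ∫ p : H × H, (inner ℝ p.1 p.2 : ℝ) ∂(P.map fun ω => (f ω, g ω)) := by
        rw [integral_map (hf.aemeasurable.prodMk hg.aemeasurable)
          hcont.aestronglyMeasurable]
    _ = ∫ p : H × H, (inner ℝ p.1 p.2 : ℝ) ∂(μ.prod ν) := by rw [hmap]
    _ = ∫ x, ∫ y, (inner ℝ x y : ℝ) ∂ν ∂μ := integral_prod _ hprodint
    _ = ∫ x, (inner ℝ x (∫ y, y ∂ν) : ℝ) ∂μ := by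
        refine integral_congr_ae (Filter.Eventually.of_forall fun x => ?_)
        exact (innerSL ℝ x).integral_comp_comm hνint
    _ = ∫ x, (inner ℝ (∫ y, y ∂ν) x : ℝ) ∂μ :=
        integral_congr_ae (Filter.Eventually.of_forall fun x => real_inner_comm _ _)
    _ = (inner ℝ (∫ y, y ∂ν) (∫ x, x ∂μ) : ℝ) := by
        have h2 := ((innerSL ℝ (∫ y, y ∂ν)).integral_comp_comm hμint)
        simp only [innerSL_apply_apply] at h2
        exact h2
    _ = (inner ℝ (∫ x, x ∂μ) (∫ y, y ∂ν) : ℝ) := real_inner_comm _ _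
    _ = (inner ℝ (∫ ω, f ω ∂P) (∫ ω, g ω ∂P) : ℝ) := by
        have h3 : (∫ x : H, x ∂μ) = ∫ ω, f ω ∂P :=
          integral_map hf.aemeasurable aestronglyMeasurable_id
        have h4 : (∫ y : H, y ∂ν) = ∫ ω, g ω ∂P :=
          integral_map hg.aemeasurable aestronglyMeasurable_id
        rw [h3, h4]

lemma aux_norm_sq_sum {Ω H : Type*} [MeasurableSpace Ω]
    [NormedAddCommGroup H] [InnerProductSpace ℝ H] [CompleteSpace H]
    [SecondCountableTopology H] [MeasurableSpace H] [BorelSpace H]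
    (P : Measure Ω) [IsProbabilityMeasure P]
    (Z : ℕ → Ω → H) (hZ : ∀ i, Measurable (Z i)) {C : ℝ} (hC : 0 ≤ C)
    (hb : ∀ i ω, ‖Z i ω‖ ≤ C) (hcent : ∀ i, ∫ ω, Z i ω ∂P = 0)
    (hind : ∀ i j, i ≠ j → IndepFun (Z i) (Z j) P) (s : Finset ℕ) :
    ∫ ω, ‖∑ i ∈ s, Z i ω‖^2 ∂P ≤ (s.card : ℝ) * C^2 := by
  have hinner_int : ∀ i j, Integrable (fun ω => (inner ℝ (Z i ω) (Z j ω) : ℝ)) P := by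
    intro i j
    refine Integrable.mono' (integrable_const (C*C))
      ((hZ i).inner (hZ j)).aestronglyMeasurable
      (Filter.Eventually.of_forall fun ω => ?_)
    calc ‖(inner ℝ (Z i ω) (Z j ω) : ℝ)‖ ≤ ‖Z i ω‖ * ‖Z j ω‖ := norm_inner_le_norm _ _
    _ ≤ C * C := mul_le_mul (hb i ω) (hb j ω) (norm_nonneg _) hC
  have key : ∫ ω, ‖∑ i ∈ s, Z i ω‖^2 ∂P = ∑ i ∈ s, ∫ ω, ‖Z i ω‖^2 ∂P := by
    have e1 : ∀ ω, ‖∑ i ∈ s, Z i ω‖^2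
        = ∑ i ∈ s, ∑ j ∈ s, (inner ℝ (Z i ω) (Z j ω) : ℝ) := by
      intro ω
      rw [← real_inner_self_eq_norm_sq, sum_inner]
      exact Finset.sum_congr rfl fun i _ => inner_sum _ _ _
    calc ∫ ω, ‖∑ i ∈ s, Z i ω‖^2 ∂P
        = ∫ ω, ∑ i ∈ s, ∑ j ∈ s, (inner ℝ (Z i ω) (Z j ω) : ℝ) ∂P :=
          integral_congr_ae (Filter.Eventually.of_forall fun ω => e1 ω)
      _ = ∑ i ∈ s, ∑ j ∈ s, ∫ ω, (inner ℝ (Z i ω) (Z j ω) : ℝ) ∂P := by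
          rw [integral_finset_sum s fun i _ => integrable_finset_sum s fun j _ => hinner_int i j]
          exact Finset.sum_congr rfl fun i _ =>
            integral_finset_sum s fun j _ => hinner_int i j
      _ = ∑ i ∈ s, ∫ ω, (inner ℝ (Z i ω) (Z i ω) : ℝ) ∂P := by
          refine Finset.sum_congr rfl fun i hi => ?_
          refine Finset.sum_eq_single_of_mem i hi fun j hj hji => ?_
          rw [aux_integral_inner_of_indep P (hZ i) (hZ j) (hb i) (hb j)
            (hind i j (Ne.symm hji)), hcent i, hcent j, inner_zero_left]
      _ = ∑ i ∈ s, ∫ ω, ‖Z i ω‖^2 ∂P :=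
          Finset.sum_congr rfl fun i _ => integral_congr_ae
            (Filter.Eventually.of_forall fun ω => real_inner_self_eq_norm_sq _)
  rw [key]
  have hb2 : ∀ i ∈ s, ∫ ω, ‖Z i ω‖^2 ∂P ≤ C^2 := by
    intro i _
    have : ∫ ω, ‖Z i ω‖^2 ∂P ≤ ∫ _ω, C^2 ∂P := by
      refine integral_mono_of_nonneg (Filter.Eventually.of_forall fun ω => by positivity)
        (integrable_const _) (Filter.Eventually.of_forall fun ω => ?_)
      exact pow_le_pow_left₀ (norm_nonneg _) (hb i ω) 2
    simpa using this
  calc ∑ i ∈ s, ∫ ω, ‖Z i ω‖^2 ∂P ≤ ∑ _i ∈ s, C^2 := Finset.sum_le_sum hb2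
  _ = (s.card : ℝ) * C^2 := by rw [Finset.sum_const, nsmul_eq_mul]

lemma aux_jensen {Ω : Type*} [MeasurableSpace Ω] (P : Measure Ω) [IsProbabilityMeasure P]
    {h : Ω → ℝ} (hm : AEStronglyMeasurable h P) {D : ℝ}
    (h0 : ∀ ω, 0 ≤ h ω) (hD : ∀ ω, h ω ≤ D) :
    ∫ ω, h ω ∂P ≤ Real.sqrt (∫ ω, (h ω)^2 ∂P) := by
  have hmem : MemLp h 2 P := MemLp.of_bound hm D
    (Filter.Eventually.of_forall fun ω => by
      rw [Real.norm_eq_abs, abs_of_nonneg (h0 ω)]; exact hD ω)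
  have hv := variance_nonneg h P
  rw [variance_eq_sub hmem] at hv
  have h1 : (∫ ω, h ω ∂P)^2 ≤ ∫ ω, (h ω)^2 ∂P := by
    have h5 : (P[h])^2 ≤ P[h ^ 2] := by linarith
    simpa [Pi.pow_apply] using h5
  have h2 : 0 ≤ ∫ ω, h ω ∂P := integral_nonneg h0
  calc ∫ ω, h ω ∂P = Real.sqrt ((∫ ω, h ω ∂P)^2) := (Real.sqrt_sq h2).symm
  _ ≤ Real.sqrt (∫ ω, (h ω)^2 ∂P) := Real.sqrt_le_sqrt h1

/-- Sequence version (p=1): for pairwise independent Hilbert-space random vectors with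
Cesàro uniformly integrable norms, the normalized maximal centered partial sums converge
to 0 in L_1. -/
theorem l1_convergence_maximal_sums_seq
    {Ω H : Type*} [MeasurableSpace Ω]
    [NormedAddCommGroup H] [InnerProductSpace ℝ H] [CompleteSpace H]
    [SecondCountableTopology H] [MeasurableSpace H] [BorelSpace H]
    (P : Measure Ω) [IsProbabilityMeasure P]
    (X : ℕ → Ω → H)
    (hmeas : ∀ i, Measurable (X i))
    (hint : ∀ i, Integrable (X i) P)
    (hindep : ∀ i j, i ≠ j → IndepFun (X i) (X j) P)
    -- Cesàro uniform integrability of {‖X_n‖}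
    (hUI : ∀ ε > (0 : ℝ), ∃ a : ℝ, 0 < a ∧ ∀ b ≥ a, ∀ n : ℕ, 1 ≤ n →
      (1 / (n : ℝ)) * ∑ i ∈ Finset.Icc 1 n,
        ∫ ω, Set.indicator {ω | b < ‖X i ω‖} (fun ω => ‖X i ω‖) ω ∂P ≤ ε) :
    Tendsto (fun n : ℕ =>
        ∫ ω, ((((Finset.Icc 1 n).sup fun k =>
            ‖∑ i ∈ Finset.Icc 1 k, (X i ω - ∫ ω', X i ω' ∂P)‖₊ : NNReal) : ℝ) /
          (n : ℝ)) ∂P)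
      atTop (nhds 0) := by
  set c : ℕ → H := fun i => ∫ ω', X i ω' ∂P with hc
  set F : ℕ → ℝ := fun n => ∫ ω, ((((Finset.Icc 1 n).sup fun k =>
      ‖∑ i ∈ Finset.Icc 1 k, (X i ω - c i)‖₊ : NNReal) : ℝ) / (n : ℝ)) ∂P with hF
  have hF0 : ∀ n, 0 ≤ F n := fun n =>
    integral_nonneg fun ω => div_nonneg (NNReal.coe_nonneg _) (Nat.cast_nonneg n)
  rw [Metric.tendsto_atTop]
  intro ε hε
  obtain ⟨a, ha, hUIa⟩ := hUI (ε/8) (by positivity)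
  -- truncation
  set Y : ℕ → Ω → H := fun i ω => if ‖X i ω‖ ≤ a then X i ω else 0 with hY
  have hψm : Measurable (fun x : H => if ‖x‖ ≤ a then x else (0:H)) :=
    Measurable.ite (measurableSet_le measurable_norm measurable_const)
      measurable_id measurable_const
  have hYm : ∀ i, Measurable (Y i) := fun i => hψm.comp (hmeas i)
  have hYb : ∀ i ω, ‖Y i ω‖ ≤ a := by
    intro i ω; simp only [hY]; split
    · assumption
    · simpa using ha.le
  have hYint : ∀ i, Integrable (Y i) P := fun i =>
    Integrable.mono' (integrable_const a) (hYm i).aestronglyMeasurable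
      (Filter.Eventually.of_forall (hYb i))
  set cY : ℕ → H := fun i => ∫ ω, Y i ω ∂P with hcY
  have hcYb : ∀ i, ‖cY i‖ ≤ a := by
    intro i
    calc ‖cY i‖ ≤ ∫ ω, ‖Y i ω‖ ∂P := norm_integral_le_integral_norm _
    _ ≤ ∫ _ω, a ∂P := integral_mono (hYint i).norm (integrable_const a) (hYb i)
    _ = a := by simp
  set Z : ℕ → Ω → H := fun i ω => Y i ω - cY i with hZdef
  have hZm : ∀ i, Measurable (Z i) := fun i => (hYm i).sub measurable_const
  have hZb : ∀ i ω, ‖Z i ω‖ ≤ 2*a := by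
    intro i ω
    calc ‖Z i ω‖ ≤ ‖Y i ω‖ + ‖cY i‖ := norm_sub_le _ _
    _ ≤ a + a := add_le_add (hYb i ω) (hcYb i)
    _ = 2*a := by ring
  have h2a : (0:ℝ) ≤ 2*a := by positivity
  have hZint : ∀ i, Integrable (Z i) P := fun i => (hYint i).sub (integrable_const _)
  have hZcent : ∀ i, ∫ ω, Z i ω ∂P = 0 := by
    intro i
    rw [hZdef]
    rw [integral_sub (hYint i) (integrable_const _), integral_const]
    simp [hcY]
  have hZind : ∀ i j, i ≠ j → IndepFun (Z i) (Z j) P := by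
    intro i j hij
    have he : ∀ k, Z k = (fun x => (if ‖x‖ ≤ a then x else 0) - cY k) ∘ X k := fun k => rfl
    rw [he i, he j]
    exact (hindep i j hij).comp (hψm.sub measurable_const) (hψm.sub measurable_const)
  -- tail quantities
  set g : ℕ → Ω → ℝ := fun i ω => ‖X i ω - Y i ω‖ with hg
  have hg0 : ∀ i ω, 0 ≤ g i ω := fun i ω => norm_nonneg _
  have hgeq : ∀ i ω, g i ω = Set.indicator {ω | a < ‖X i ω‖} (fun ω => ‖X i ω‖) ω := by
    intro i ω
    simp only [hg, hY, Set.indicator_apply, Set.mem_setOf_eq]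
    by_cases h : ‖X i ω‖ ≤ a
    · rw [if_neg (not_lt.mpr h), if_pos h]; simp
    · rw [if_pos (not_le.mp h), if_neg h]; simp
  have hgint : ∀ i, Integrable (g i) P := fun i => ((hint i).sub (hYint i)).norm
  set t : ℕ → ℝ := fun i => ∫ ω, g i ω ∂P with ht
  have ht0 : ∀ i, 0 ≤ t i := fun i => integral_nonneg fun ω => norm_nonneg _
  have hteq : ∀ i, t i = ∫ ω, Set.indicator {ω | a < ‖X i ω‖} (fun ω => ‖X i ω‖) ω ∂P :=
    fun i => integral_congr_ae (Filter.Eventually.of_forall (hgeq i))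
  have htail : ∀ n : ℕ, 1 ≤ n → (1 / (n:ℝ)) * ∑ i ∈ Finset.Icc 1 n, t i ≤ ε/8 := by
    intro n hn
    have h1 : ∑ i ∈ Finset.Icc 1 n, t i
        = ∑ i ∈ Finset.Icc 1 n, ∫ ω, Set.indicator {ω | a < ‖X i ω‖}
            (fun ω => ‖X i ω‖) ω ∂P :=
      Finset.sum_congr rfl fun i _ => hteq i
    rw [h1]
    exact hUIa a le_rfl n hn
  have hWt : ∀ i, ‖c i - cY i‖ ≤ t i := by
    intro i
    have heq : c i - cY i = ∫ ω, (X i ω - Y i ω) ∂P := (integral_sub (hint i) (hYint i)).symm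
    rw [heq]
    exact norm_integral_le_integral_norm _
  -- choose block length m
  set m : ℕ := ⌈(16*a/ε)^2⌉₊ + 1 with hm
  have hm1 : 1 ≤ m := Nat.le_add_left 1 _
  have hm0 : (0:ℝ) < m := by positivity
  have hsqrtm : 16*a/ε ≤ Real.sqrt m := by
    rw [show (16*a/ε : ℝ) = Real.sqrt ((16*a/ε)^2) from
      (Real.sqrt_sq (by positivity)).symm]
    apply Real.sqrt_le_sqrt
    calc (16*a/ε)^2 ≤ (⌈(16*a/ε)^2⌉₊ : ℝ) := Nat.le_ceil _
    _ ≤ m := by rw [hm]; push_cast; linarith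
  have hmbound : 2*a/Real.sqrt m ≤ ε/8 := by
    have hs0 : 0 < Real.sqrt m := Real.sqrt_pos.mpr hm0
    rw [div_le_iff₀ hs0]
    calc 2*a = (ε/8) * (16*a/ε) := by field_simp; ring
    _ ≤ (ε/8) * Real.sqrt m := by
        apply mul_le_mul_of_nonneg_left hsqrtm (by positivity)
  -- choose N
  set N : ℕ := max 1 (⌈16*a*m/ε⌉₊ + 1) with hN
  refine ⟨N, fun n hn => ?_⟩
  have hn1 : 1 ≤ n := le_trans (le_max_left _ _) hn
  have hn0 : (0:ℝ) < n := by exact_mod_cast hn1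
  have hnm : 16*a*m/ε ≤ n := by
    have h1 : (⌈16*a*m/ε⌉₊ + 1 : ℕ) ≤ n := le_trans (le_max_right _ _) hn
    calc (16*a*m/ε : ℝ) ≤ ⌈16*a*m/ε⌉₊ := Nat.le_ceil _
    _ ≤ n := by exact_mod_cast le_trans (Nat.le_succ _) h1
  have hNbound : 2*a*m/n ≤ ε/8 := by
    rw [div_le_iff₀ hn0]
    calc 2*a*m = (ε/8)*(16*a*m/ε) := by field_simp; ring
    _ ≤ (ε/8)*n := mul_le_mul_of_nonneg_left hnm (by positivity)
  -- block structure
  set J : ℕ := n / m with hJ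
  set SZ : ℕ → Ω → H := fun k ω => ∑ i ∈ Finset.Icc 1 k, Z i ω with hSZ
  set G : Ω → ℝ := fun ω => Real.sqrt (∑ j ∈ Finset.Icc 1 J, ‖SZ (j*m) ω‖^2) with hG
  set R : Ω → ℝ := fun ω => ∑ i ∈ Finset.Icc 1 n, (g i ω + t i) with hR
  have hIccIoc : ∀ u : ℕ, Finset.Icc 1 u = Finset.Ioc 0 u := by
    intro u; ext x; simp only [Finset.mem_Icc, Finset.mem_Ioc]; omega
  have hSZb : ∀ k ω, ‖SZ k ω‖ ≤ k * (2*a) := by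
    intro k ω
    calc ‖SZ k ω‖ ≤ ∑ i ∈ Finset.Icc 1 k, ‖Z i ω‖ := norm_sum_le _ _
    _ ≤ ∑ _i ∈ Finset.Icc 1 k, 2*a := Finset.sum_le_sum fun i _ => hZb i ω
    _ = ((Finset.Icc 1 k).card : ℝ) * (2*a) := by rw [Finset.sum_const, nsmul_eq_mul]
    _ = k * (2*a) := by rw [Nat.card_Icc]; norm_num
  -- pointwise claim
  have hclaim : ∀ ω, ∀ k ∈ Finset.Icc 1 n,
      ‖∑ i ∈ Finset.Icc 1 k, (X i ω - c i)‖ ≤ G ω + 2*a*m + R ω := by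
    intro ω k hk
    rw [Finset.mem_Icc] at hk
    -- decomposition
    have hdec : ∑ i ∈ Finset.Icc 1 k, (X i ω - c i)
        = SZ k ω + ∑ i ∈ Finset.Icc 1 k, ((X i ω - Y i ω) - (c i - cY i)) := by
      rw [hSZ, ← Finset.sum_add_distrib]
      refine Finset.sum_congr rfl fun i _ => ?_
      simp only [hZdef]
      abel
    have hterm2 : ‖∑ i ∈ Finset.Icc 1 k, ((X i ω - Y i ω) - (c i - cY i))‖ ≤ R ω := by
      calc ‖∑ i ∈ Finset.Icc 1 k, ((X i ω - Y i ω) - (c i - cY i))‖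
          ≤ ∑ i ∈ Finset.Icc 1 k, ‖(X i ω - Y i ω) - (c i - cY i)‖ := norm_sum_le _ _
        _ ≤ ∑ i ∈ Finset.Icc 1 k, (g i ω + t i) := by
            refine Finset.sum_le_sum fun i _ => ?_
            calc ‖(X i ω - Y i ω) - (c i - cY i)‖
                ≤ ‖X i ω - Y i ω‖ + ‖c i - cY i‖ := norm_sub_le _ _
              _ ≤ g i ω + t i := add_le_add le_rfl (hWt i)
        _ ≤ R ω := by
            refine Finset.sum_le_sum_of_subset_of_nonneg
              (Finset.Icc_subset_Icc_right hk.2) fun i _ _ => ?_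
            exact add_nonneg (hg0 i ω) (ht0 i)
    -- block bound for SZ k
    have hblock : ‖SZ k ω‖ ≤ G ω + 2*a*m := by
      set j : ℕ := k / m with hj
      have hjm_le : j * m ≤ k := Nat.div_mul_le_self k m
      have hsplit : SZ k ω = SZ (j*m) ω + ∑ i ∈ Finset.Ioc (j*m) k, Z i ω := by
        rw [hSZ]
        simp only
        rw [hIccIoc k, hIccIoc (j*m)]
        rw [← Finset.sum_Ioc_consecutive _ (Nat.zero_le (j*m)) hjm_le]
      have hpart : ‖∑ i ∈ Finset.Ioc (j*m) k, Z i ω‖ ≤ 2*a*m := by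
        calc ‖∑ i ∈ Finset.Ioc (j*m) k, Z i ω‖
            ≤ ∑ i ∈ Finset.Ioc (j*m) k, ‖Z i ω‖ := norm_sum_le _ _
          _ ≤ ∑ _i ∈ Finset.Ioc (j*m) k, 2*a := Finset.sum_le_sum fun i _ => hZb i ω
          _ = ((k - j*m : ℕ) : ℝ) * (2*a) := by
              rw [Finset.sum_const, Nat.card_Ioc, nsmul_eq_mul]
          _ ≤ (m : ℝ) * (2*a) := by
              have hmod := Nat.mod_lt k (show 0 < m by omega)
              have hdm : k % m + k / m * m = k := Nat.mod_add_div' k m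
              have : (k - j*m : ℕ) ≤ m := by
                rw [hj]
                omega
              exact mul_le_mul_of_nonneg_right (by exact_mod_cast this) h2a
          _ = 2*a*m := by ring
      have hmain : ‖SZ (j*m) ω‖ ≤ G ω := by
        rcases Nat.eq_zero_or_pos j with hj0 | hj1
        · have h0' : SZ (j*m) ω = 0 := by rw [hj0]; simp [hSZ]
          rw [h0', norm_zero]
          exact Real.sqrt_nonneg _
        · have hjJ : j ∈ Finset.Icc 1 J := by
            rw [Finset.mem_Icc]
            exact ⟨hj1, by rw [hj, hJ]; exact Nat.div_le_div_right hk.2⟩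
          rw [hG]
          rw [Real.le_sqrt (norm_nonneg _) (Finset.sum_nonneg fun j' _ => sq_nonneg _)]
          exact Finset.single_le_sum (fun j' _ => sq_nonneg ‖SZ (j'*m) ω‖) hjJ
      calc ‖SZ k ω‖ ≤ ‖SZ (j*m) ω‖ + ‖∑ i ∈ Finset.Ioc (j*m) k, Z i ω‖ := by
            rw [hsplit]; exact norm_add_le _ _
        _ ≤ G ω + 2*a*m := add_le_add hmain hpart
    calc ‖∑ i ∈ Finset.Icc 1 k, (X i ω - c i)‖
        ≤ ‖SZ k ω‖ + ‖∑ i ∈ Finset.Icc 1 k, ((X i ω - Y i ω) - (c i - cY i))‖ := by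
          rw [hdec]; exact norm_add_le _ _
      _ ≤ (G ω + 2*a*m) + R ω := add_le_add hblock hterm2
  -- sup bound
  have hR0 : ∀ ω, 0 ≤ R ω := fun ω =>
    Finset.sum_nonneg fun i _ => add_nonneg (hg0 i ω) (ht0 i)
  have hrhs0 : ∀ ω, 0 ≤ G ω + 2*a*m + R ω := fun ω => by
    have := Real.sqrt_nonneg (∑ j ∈ Finset.Icc 1 J, ‖SZ (j*m) ω‖^2)
    have := hR0 ω
    have : (0:ℝ) ≤ 2*a*m := by positivity
    positivity
  have hsup : ∀ ω, (((Finset.Icc 1 n).sup fun k =>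
      (‖∑ i ∈ Finset.Icc 1 k, (X i ω - c i)‖₊ : NNReal) : NNReal) : ℝ)
      ≤ G ω + 2*a*m + R ω := by
    intro ω
    have hle : (Finset.Icc 1 n).sup (fun k => ‖∑ i ∈ Finset.Icc 1 k, (X i ω - c i)‖₊)
        ≤ ⟨G ω + 2*a*m + R ω, hrhs0 ω⟩ := by
      refine Finset.sup_le fun k hk => ?_
      apply NNReal.coe_le_coe.mp
      exact hclaim ω k hk
    exact_mod_cast hle
  -- integrability and integral bounds
  have hSZm : ∀ k, Measurable fun ω => SZ k ω := fun k =>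
    Finset.measurable_sum _ fun i _ => hZm i
  have hGm : Measurable G := by
    apply Measurable.comp Real.continuous_sqrt.measurable
    exact Finset.measurable_sum _ fun j _ => ((hSZm (j*m)).norm.pow_const 2)
  have hGb : ∀ ω, G ω ≤ Real.sqrt ((J:ℝ) * ((n:ℝ)*(2*a))^2) := by
    intro ω
    apply Real.sqrt_le_sqrt
    calc ∑ j ∈ Finset.Icc 1 J, ‖SZ (j*m) ω‖^2
        ≤ ∑ _j ∈ Finset.Icc 1 J, ((n:ℝ)*(2*a))^2 := by
          refine Finset.sum_le_sum fun j hj => ?_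
          rw [Finset.mem_Icc] at hj
          have h1 : ‖SZ (j*m) ω‖ ≤ (j*m : ℕ) * (2*a) := by
            have := hSZb (j*m) ω
            simpa using this
          have h2 : ((j*m : ℕ) : ℝ) ≤ (n : ℝ) := by
            have : j * m ≤ n := Nat.le_trans (Nat.mul_le_mul_right m hj.2)
              (Nat.div_mul_le_self n m)
            exact_mod_cast this
          have h3 : ‖SZ (j*m) ω‖ ≤ (n:ℝ)*(2*a) := le_trans h1
            (mul_le_mul_of_nonneg_right h2 h2a)
          exact pow_le_pow_left₀ (norm_nonneg _) h3 2
      _ = ((Finset.Icc 1 J).card : ℝ) * ((n:ℝ)*(2*a))^2 := by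
          rw [Finset.sum_const, nsmul_eq_mul]
      _ ≤ (J:ℝ) * ((n:ℝ)*(2*a))^2 := by
          rw [Nat.card_Icc]
          norm_num
  have hGint : Integrable G P :=
    Integrable.mono' (integrable_const _) hGm.aestronglyMeasurable
      (Filter.Eventually.of_forall fun ω => by
        rw [Real.norm_eq_abs, abs_of_nonneg (Real.sqrt_nonneg _)]
        exact hGb ω)
  have hGTint : ∀ i : ℕ, Integrable (fun ω => g i ω + t i) P := fun i =>
    (hgint i).add (integrable_const _)
  have hRint : Integrable R P := integrable_finset_sum _ fun i _ => hGTint i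
  -- bound ∫ G
  have hGsum_int : ∀ j : ℕ, Integrable (fun ω => ‖SZ (j*m) ω‖^2) P := by
    intro j
    refine Integrable.mono' (integrable_const ((((j*m : ℕ):ℝ)*(2*a))^2))
      ((hSZm (j*m)).norm.pow_const 2).aestronglyMeasurable
      (Filter.Eventually.of_forall fun ω => ?_)
    rw [Real.norm_eq_abs, abs_of_nonneg (sq_nonneg _)]
    exact pow_le_pow_left₀ (norm_nonneg _) (hSZb (j*m) ω) 2
  have hGI : ∫ ω, G ω ∂P ≤ 2*a*n/Real.sqrt m := by
    have hj1 : ∫ ω, G ω ∂P ≤ Real.sqrt (∫ ω, (G ω)^2 ∂P) := by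
      refine aux_jensen P hGm.aestronglyMeasurable
        (fun ω => Real.sqrt_nonneg _) hGb
    have hj2 : ∫ ω, (G ω)^2 ∂P = ∑ j ∈ Finset.Icc 1 J, ∫ ω, ‖SZ (j*m) ω‖^2 ∂P := by
      rw [show (fun ω => (G ω)^2) = fun ω => ∑ j ∈ Finset.Icc 1 J, ‖SZ (j*m) ω‖^2 from
        funext fun ω => Real.sq_sqrt (Finset.sum_nonneg fun j _ => sq_nonneg _)]
      exact integral_finset_sum _ fun j _ => hGsum_int j
    have hj3 : ∑ j ∈ Finset.Icc 1 J, ∫ ω, ‖SZ (j*m) ω‖^2 ∂P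
        ≤ (J:ℝ) * ((n:ℝ) * (2*a)^2) := by
      calc ∑ j ∈ Finset.Icc 1 J, ∫ ω, ‖SZ (j*m) ω‖^2 ∂P
          ≤ ∑ _j ∈ Finset.Icc 1 J, (n:ℝ) * (2*a)^2 := by
            refine Finset.sum_le_sum fun j hj => ?_
            rw [Finset.mem_Icc] at hj
            have hcard : ((Finset.Icc 1 (j*m)).card : ℝ) ≤ (n:ℝ) := by
              rw [Nat.card_Icc]
              have : j * m ≤ n := Nat.le_trans (Nat.mul_le_mul_right m hj.2)
                (Nat.div_mul_le_self n m)
              exact_mod_cast by omega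
            calc ∫ ω, ‖SZ (j*m) ω‖^2 ∂P
                ≤ ((Finset.Icc 1 (j*m)).card : ℝ) * (2*a)^2 :=
                  aux_norm_sq_sum P Z hZm h2a (fun i ω => hZb i ω) hZcent hZind _
              _ ≤ (n:ℝ) * (2*a)^2 :=
                  mul_le_mul_of_nonneg_right hcard (by positivity)
        _ = ((Finset.Icc 1 J).card : ℝ) * ((n:ℝ)*(2*a)^2) := by
            rw [Finset.sum_const, nsmul_eq_mul]
        _ ≤ (J:ℝ) * ((n:ℝ)*(2*a)^2) := by
            rw [Nat.card_Icc]
            have : (0:ℝ) ≤ (n:ℝ)*(2*a)^2 := by positivity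
            have hcard : ((J + 1 - 1 : ℕ):ℝ) ≤ (J:ℝ) := by norm_num
            exact mul_le_mul_of_nonneg_right hcard this
    have hj4 : (J:ℝ) * ((n:ℝ) * (2*a)^2) ≤ (2*a*n/Real.sqrt m)^2 := by
      have hJle : (J:ℝ) ≤ (n:ℝ)/(m:ℝ) := Nat.cast_div_le
      have hsq : (2*a*n/Real.sqrt m)^2 = (n:ℝ)/(m:ℝ) * ((n:ℝ) * (2*a)^2) := by
        rw [div_pow, Real.sq_sqrt hm0.le]
        field_simp
      rw [hsq]
      exact mul_le_mul_of_nonneg_right hJle (by positivity)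
    calc ∫ ω, G ω ∂P ≤ Real.sqrt (∫ ω, (G ω)^2 ∂P) := hj1
      _ ≤ Real.sqrt ((2*a*n/Real.sqrt m)^2) := by
          apply Real.sqrt_le_sqrt
          rw [hj2]
          exact le_trans hj3 hj4
      _ = 2*a*n/Real.sqrt m := Real.sqrt_sq (by positivity)
  -- bound ∫ R
  have hRI : ∫ ω, R ω ∂P = 2 * ∑ i ∈ Finset.Icc 1 n, t i := by
    simp only [hR]
    rw [integral_finset_sum _ fun i _ => hGTint i]
    rw [Finset.mul_sum]
    refine Finset.sum_congr rfl fun i _ => ?_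
    rw [integral_add (hgint i) (integrable_const _), integral_const]
    simp [ht]
    ring
  -- final computation
  have hFn : F n ≤ ε/2 := by
    have hMint : F n = (∫ ω, (((Finset.Icc 1 n).sup fun k =>
        (‖∑ i ∈ Finset.Icc 1 k, (X i ω - c i)‖₊ : NNReal) : NNReal) : ℝ) ∂P) / n := by
      rw [hF]
      exact integral_div _ _
    rw [hMint]
    have hup : (∫ ω, (((Finset.Icc 1 n).sup fun k =>
        (‖∑ i ∈ Finset.Icc 1 k, (X i ω - c i)‖₊ : NNReal) : NNReal) : ℝ) ∂P)
        ≤ ∫ ω, (G ω + 2*a*m + R ω) ∂P := by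
      refine integral_mono_of_nonneg
        (Filter.Eventually.of_forall fun ω => NNReal.coe_nonneg _)
        ((hGint.add (integrable_const _)).add hRint)
        (Filter.Eventually.of_forall fun ω => hsup ω)
    have hsplit2 : ∫ ω, (G ω + 2*a*m + R ω) ∂P
        = (∫ ω, G ω ∂P) + 2*a*m + ∫ ω, R ω ∂P := by
      have hint1 : Integrable (fun ω => G ω + 2*a*(m:ℝ)) P := hGint.add (integrable_const _)
      rw [integral_add hint1 hRint, integral_add hGint (integrable_const _), integral_const]
      simp
    have hbound : ∫ ω, (G ω + 2*a*m + R ω) ∂P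
        ≤ 2*a*n/Real.sqrt m + 2*a*m + 2 * ∑ i ∈ Finset.Icc 1 n, t i := by
      rw [hsplit2, hRI]
      have := hGI
      linarith
    calc (∫ ω, (((Finset.Icc 1 n).sup fun k =>
          (‖∑ i ∈ Finset.Icc 1 k, (X i ω - c i)‖₊ : NNReal) : NNReal) : ℝ) ∂P) / n
        ≤ (2*a*n/Real.sqrt m + 2*a*m + 2 * ∑ i ∈ Finset.Icc 1 n, t i) / n := by
          gcongr
          exact le_trans hup hbound
      _ = 2*a/Real.sqrt m * (n/n) + 2*a*m/n + 2 * ((1/(n:ℝ)) * ∑ i ∈ Finset.Icc 1 n, t i) := by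
          field_simp
      _ ≤ ε/8 + ε/8 + 2*(ε/8) := by
          rw [div_self hn0.ne', mul_one]
          have h1 := htail n hn1
          have h2 : (0:ℝ) ≤ 2 := by norm_num
          have h3 : 2 * ((1/(n:ℝ)) * ∑ i ∈ Finset.Icc 1 n, t i) ≤ 2*(ε/8) :=
            mul_le_mul_of_nonneg_left h1 h2
          exact add_le_add (add_le_add hmbound hNbound) h3
      _ = ε/2 := by ring
  rw [Real.dist_eq, sub_zero, abs_of_nonneg (hF0 n)]
  linarith
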